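/- Let r_n(q) = R(K_n)(q) denote the reliability polynomial of the complete graph K_n on n vertices. Then for every integer n ≥ 2 and every q ∈ [0, 1/8], 1 − (n+1)q^{n−1} ≤ r_n(q) ≤ 1 − (n−1)q^{n−1}. -/

import Mathlib

open Finset

/-- `relCoeff G i` is the number of `i`-element subsets `S` of the edge set of `G` such that
the spanning subgraph `(V, S)` is connected. -/
noncomputable def relCoeff {V : Type*} [Fintype V] (G : SimpleGraph V) (i : ℕ) : ℕ :=
  {S : Finset (Sym2 V) | ↑S ⊆ G.edgeSet ∧ S.card = i ∧
    (SimpleGraph.fromEdgeSet (↑S : Set (Sym2 V))).Connected}.ncard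

/-- The number of edges of `G`. -/
noncomputable def numEdges {V : Type*} [Fintype V] (G : SimpleGraph V) : ℕ :=
  G.edgeSet.ncard

/-- The all-terminal reliability polynomial of `G`, as a real function of the
edge failure probability `q`. -/
noncomputable def rel {V : Type*} [Fintype V] (G : SimpleGraph V) (q : ℝ) : ℝ :=
  ∑ i ∈ Finset.range (numEdges G + 1),
    (relCoeff G i : ℝ) * (1 - q) ^ i * q ^ (numEdges G - i)

-- binomial sum lemma
theorem sum_pow_card {α : Type*} [DecidableEq α] (F : Finset α) (x y : ℝ) :
    ∑ S ∈ F.powerset, x ^ S.card * y ^ (F.card - S.card) = (x + y) ^ F.card := by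
  rw [← Finset.prod_const, Finset.prod_add]
  refine Finset.sum_congr rfl fun S hS => ?_
  rw [Finset.mem_powerset] at hS
  rw [Finset.prod_const, Finset.prod_const, Finset.card_sdiff_of_subset hS]

theorem mu_avoid {α : Type*} [DecidableEq α] (E F : Finset α) (hF : F ⊆ E) (q : ℝ) :
    ∑ S ∈ E.powerset.filter (fun S => Disjoint S F),
      (1 - q) ^ S.card * q ^ (E.card - S.card) = q ^ F.card := by
  have hset : E.powerset.filter (fun S => Disjoint S F) = (E \ F).powerset := by
    ext S; simp [Finset.mem_powerset, Finset.subset_sdiff, and_comm]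
  rw [hset]
  have hc : (E \ F).card = E.card - F.card := Finset.card_sdiff_of_subset hF
  have hFE : F.card ≤ E.card := Finset.card_le_card hF
  have : ∀ S ∈ (E \ F).powerset, (1 - q) ^ S.card * q ^ (E.card - S.card)
      = q ^ F.card * ((1 - q) ^ S.card * q ^ ((E \ F).card - S.card)) := by
    intro S hS
    rw [Finset.mem_powerset] at hS
    have hSc : S.card ≤ (E \ F).card := Finset.card_le_card hS
    have : E.card - S.card = F.card + ((E \ F).card - S.card) := by omega
    rw [this, pow_add]; ring
  rw [Finset.sum_congr rfl this, ← Finset.mul_sum, sum_pow_card]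
  norm_num
open scoped Classical in
theorem rel_eq_sum {V : Type*} [Fintype V] (G : SimpleGraph V) (q : ℝ) :
    rel G q = ∑ S ∈ G.edgeFinset.powerset.filter
        (fun (S : Finset (Sym2 V)) => (SimpleGraph.fromEdgeSet (↑S : Set (Sym2 V))).Connected),
      (1 - q) ^ S.card * q ^ (G.edgeFinset.card - S.card) := by
  have hm : numEdges G = G.edgeFinset.card := by
    rw [numEdges, ← SimpleGraph.coe_edgeFinset, Set.ncard_coe_finset]
  have hcoeff : ∀ i, relCoeff G i = ((G.edgeFinset.powerset.filter
      (fun (S : Finset (Sym2 V)) => (SimpleGraph.fromEdgeSet (↑S : Set (Sym2 V))).Connected)).filter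
      (fun S => S.card = i)).card := by
    intro i
    rw [relCoeff, ← Set.ncard_coe_finset]
    congr 1
    ext S
    simp only [Set.mem_setOf_eq, Finset.mem_coe, Finset.mem_filter, Finset.mem_powerset,
      SimpleGraph.edgeFinset, Set.subset_toFinset]
    tauto
  rw [rel]
  rw [← Finset.sum_fiberwise_of_maps_to (g := Finset.card)
      (t := Finset.range (numEdges G + 1))
      (fun S hS => by
        simp only [Finset.mem_filter, Finset.mem_powerset] at hS
        rw [Finset.mem_range, Nat.lt_succ_iff, hm]
        exact Finset.card_le_card hS.1)
      (f := fun S => (1 - q) ^ S.card * q ^ (G.edgeFinset.card - S.card))]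
  refine Finset.sum_congr rfl fun i _ => ?_
  have hconst : ∀ S ∈ ((G.edgeFinset.powerset.filter
      (fun (S : Finset (Sym2 V)) => (SimpleGraph.fromEdgeSet (↑S : Set (Sym2 V))).Connected)).filter
      (fun S => S.card = i)),
      (1 - q) ^ S.card * q ^ (G.edgeFinset.card - S.card)
        = (1 - q) ^ i * q ^ (numEdges G - i) := by
    intro S hS
    simp only [Finset.mem_filter] at hS
    rw [hS.2, hm]
  rw [Finset.sum_congr rfl hconst, Finset.sum_const, nsmul_eq_mul, hcoeff i]
  ring

section Graph

open SimpleGraph Finset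
open scoped Classical

variable {n : ℕ}

private def EK (n : ℕ) : Finset (Sym2 (Fin n)) := (⊤ : SimpleGraph (Fin n)).edgeFinset

private lemma mem_EK {e : Sym2 (Fin n)} : e ∈ EK n ↔ ¬ e.IsDiag := by
  simp [EK, mem_edgeFinset, edgeSet_top]

private def inc (v : Fin n) : Finset (Sym2 (Fin n)) :=
  (⊤ : SimpleGraph (Fin n)).incidenceFinset v

private lemma inc_card (v : Fin n) : (inc v).card = n - 1 := by
  rw [inc, card_incidenceFinset_eq_degree, complete_graph_degree, Fintype.card_fin]

private lemma inc_subset (v : Fin n) : inc v ⊆ EK n := by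
  intro e he
  rw [inc, mem_incidenceFinset] at he
  rw [mem_EK]
  have := (⊤ : SimpleGraph (Fin n)).incidenceSet_subset v he
  rw [edgeSet_top] at this; exact this

private lemma mem_inc {e : Sym2 (Fin n)} {v : Fin n} : e ∈ inc v ↔ e ∈ EK n ∧ v ∈ e := by
  rw [inc, mem_incidenceFinset]
  constructor
  · exact fun h => ⟨(inc_subset v) (by rwa [inc, mem_incidenceFinset]), h.2⟩
  · rintro ⟨h1, h2⟩
    refine ⟨?_, h2⟩
    rw [edgeSet_top]
    exact mem_EK.1 h1

private lemma inc_union_card {v w : Fin n} (hvw : v ≠ w) :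
    (inc v ∪ inc w).card = 2 * n - 3 := by
  have hadj : (⊤ : SimpleGraph (Fin n)).Adj v w := by simpa using hvw
  have hinter : inc v ∩ inc w = {s(v, w)} := by
    apply Finset.coe_injective
    simp only [Finset.coe_inter, Finset.coe_singleton, inc, incidenceFinset,
      Set.coe_toFinset]
    exact incidenceSet_inter_incidenceSet_of_adj _ hadj
  have h2 : 2 ≤ n := by
    by_contra h
    interval_cases n
    · exact absurd v.2 (by omega)
    · exact hvw (Subsingleton.elim v w)
  have := Finset.card_union_add_card_inter (inc v) (inc w)
  rw [hinter, inc_card, inc_card, Finset.card_singleton] at this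
  omega

private lemma not_connected_of_isolated (hn : 2 ≤ n) {S : Finset (Sym2 (Fin n))}
    (hS : S ⊆ EK n) {v : Fin n} (hd : Disjoint S (inc v)) :
    ¬ (SimpleGraph.fromEdgeSet (↑S : Set (Sym2 (Fin n)))).Connected := by
  intro hc
  obtain ⟨u, hu⟩ := Fintype.exists_ne_of_one_lt_card (by simp [Fintype.card_fin]; omega) v
  obtain ⟨p⟩ := hc.preconnected v u
  cases p with
  | nil => exact hu rfl
  | cons h p =>
    rename_i b
    rw [SimpleGraph.fromEdgeSet_adj] at h
    have hmem : s(v, b) ∈ S := Finset.mem_coe.1 h.1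
    have hinc : s(v, b) ∈ inc v := mem_inc.2 ⟨hS hmem, Sym2.mem_mk_left v b⟩
    exact (Finset.disjoint_left.1 hd hmem) hinc

private def cross (A : Finset (Fin n)) : Finset (Sym2 (Fin n)) :=
  (A ×ˢ Aᶜ).image (fun p => s(p.1, p.2))

private lemma cross_card (A : Finset (Fin n)) : (cross A).card = A.card * (n - A.card) := by
  rw [cross, Finset.card_image_of_injOn, Finset.card_product, Finset.card_compl,
    Fintype.card_fin]
  rintro ⟨a, b⟩ hab ⟨a', b'⟩ hab' h
  simp only [Finset.coe_product, Set.mem_prod, Finset.mem_coe, Finset.mem_compl] at hab hab'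
  simp only [Sym2.eq_iff] at h
  rcases h with ⟨rfl, rfl⟩ | ⟨h1, h2⟩
  · rfl
  · exact absurd (h1 ▸ hab.1) hab'.2

private lemma cross_subset (A : Finset (Fin n)) : cross A ⊆ EK n := by
  intro e he
  rw [cross, Finset.mem_image] at he
  obtain ⟨⟨a, b⟩, hab, rfl⟩ := he
  simp only [Finset.mem_product, Finset.mem_compl] at hab
  rw [mem_EK, Sym2.mk_isDiag_iff]
  intro h
  simp only at h
  exact hab.2 (h ▸ hab.1)

private noncomputable def comp (v0 : Fin n) (S : Finset (Sym2 (Fin n))) : Finset (Fin n) :=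
  Finset.univ.filter (fun u => (SimpleGraph.fromEdgeSet (↑S : Set (Sym2 (Fin n)))).Reachable v0 u)

private lemma comp_mem (v0 : Fin n) (S : Finset (Sym2 (Fin n))) : v0 ∈ comp v0 S := by
  simp only [comp, Finset.mem_filter, Finset.mem_univ, true_and]
  exact SimpleGraph.Reachable.refl v0

private lemma comp_ne_univ {v0 : Fin n} {S : Finset (Sym2 (Fin n))}
    (hnc : ¬ (SimpleGraph.fromEdgeSet (↑S : Set (Sym2 (Fin n)))).Connected) :
    comp v0 S ≠ Finset.univ := by
  intro h
  apply hnc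
  rw [SimpleGraph.connected_iff_exists_forall_reachable]
  exact ⟨v0, fun u => by
    have : u ∈ comp v0 S := h ▸ Finset.mem_univ u
    simpa [comp] using this⟩

private lemma comp_disjoint (v0 : Fin n) (S : Finset (Sym2 (Fin n))) :
    Disjoint S (cross (comp v0 S)) := by
  rw [Finset.disjoint_left]
  intro e heS hec
  rw [cross, Finset.mem_image] at hec
  obtain ⟨⟨a, b⟩, hab, rfl⟩ := hec
  simp only [Finset.mem_product, Finset.mem_compl] at hab
  have ha : (SimpleGraph.fromEdgeSet (↑S : Set (Sym2 (Fin n)))).Reachable v0 a := by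
    simpa [comp] using hab.1
  have hne : a ≠ b := by rintro rfl; exact hab.2 hab.1
  have hadj : (SimpleGraph.fromEdgeSet (↑S : Set (Sym2 (Fin n)))).Adj a b := by
    rw [SimpleGraph.fromEdgeSet_adj]
    exact ⟨Finset.mem_coe.2 heS, hne⟩
  exact hab.2 (by simpa [comp] using ha.trans hadj.reachable)

private lemma exp_id {n k : ℕ} (h1 : 1 ≤ k) (h2 : k < n) :
    k * (n - k) = (n - 1) + (k - 1) * (n - 1 - k) := by
  obtain ⟨a, rfl⟩ : ∃ a, k = a + 1 := ⟨k - 1, by omega⟩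
  obtain ⟨b, rfl⟩ : ∃ b, n = a + b + 2 := ⟨n - (a + 1) - 1, by omega⟩
  simp only [show a + b + 2 - (a + 1) = b + 1 from by omega,
    show a + b + 2 - 1 = a + b + 1 from by omega,
    show a + 1 - 1 = a from by omega,
    show a + b + 2 - 1 - (a + 1) = b from by omega]
  ring_nf
  rw [show 1 + a + b - (1 + a) = b from by omega]

private lemma middle_exp {n k : ℕ} (h1 : 2 ≤ k) (h2 : k ≤ n - 2) (hn : 4 ≤ n) :
    n - 3 ≤ (k - 1) * (n - 1 - k) := by
  have h := exp_id (n := n - 2) (k := k - 1) (by omega) (by omega)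
  have e : n - 2 - (k - 1) = n - 1 - k := by omega
  have e2 : n - 2 - 1 = n - 3 := by omega
  rw [e, e2] at h
  omega

private lemma nat_mul_bound : ∀ m : ℕ, 3 ≤ m → m * (m - 1) ≤ 8 ^ (m - 2) := by
  intro m hm
  induction m, hm using Nat.le_induction with
  | base => norm_num
  | succ m hm ih =>
    have h1 : (m + 1) * (m + 1 - 1) ≤ 8 * (m * (m - 1)) := by
      obtain ⟨k, rfl⟩ : ∃ k, m = k + 1 := ⟨m - 1, by omega⟩
      simp only [Nat.add_sub_cancel]
      nlinarith
    have h2 : 8 * (m * (m - 1)) ≤ 8 * 8 ^ (m - 2) := by omega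
    have h3 : 8 * 8 ^ (m - 2) = 8 ^ (m + 1 - 2) := by
      rw [← pow_succ']
      congr 1
      omega
    omega

private lemma middle_count_bound {n : ℕ} (hn : 4 ≤ n) :
    (2 : ℝ) ^ (n - 1) * (1 / 8) ^ (n - 3) ≤ 1 := by
  have h8 : ((8 : ℝ)) ^ (n - 3) ≠ 0 := by positivity
  have key : (2 : ℝ) ^ (n - 1) ≤ 8 ^ (n - 3) := by
    have : (8 : ℝ) ^ (n - 3) = 2 ^ (3 * (n - 3)) := by
      rw [pow_mul]; norm_num
    rw [this]
    exact pow_le_pow_right₀ (by norm_num) (by omega)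
  rw [div_pow, one_pow]
  calc (2:ℝ) ^ (n-1) * (1 / 8 ^ (n-3)) ≤ 8 ^ (n-3) * (1 / 8 ^ (n-3)) := by
        apply mul_le_mul_of_nonneg_right key
        positivity
    _ = 1 := by field_simp

private noncomputable def wt (n : ℕ) (q : ℝ) (S : Finset (Sym2 (Fin n))) : ℝ :=
  (1 - q) ^ S.card * q ^ ((EK n).card - S.card)

private def ConnP {n : ℕ} (S : Finset (Sym2 (Fin n))) : Prop :=
  (SimpleGraph.fromEdgeSet (↑S : Set (Sym2 (Fin n)))).Connected

private noncomputable def DD (n : ℕ) : Finset (Finset (Sym2 (Fin n))) :=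
  (EK n).powerset.filter (fun S => ¬ ConnP S)

private lemma wt_nonneg {q : ℝ} (hq0 : 0 ≤ q) (hq1 : q ≤ 1) (S : Finset (Sym2 (Fin n))) :
    0 ≤ wt n q S :=
  mul_nonneg (pow_nonneg (by linarith) _) (pow_nonneg hq0 _)

private lemma mu_avoid' {F : Finset (Sym2 (Fin n))} (hF : F ⊆ EK n) (q : ℝ) :
    ∑ S ∈ (EK n).powerset.filter (fun S => Disjoint S F), wt n q S = q ^ F.card :=
  mu_avoid (EK n) F hF q

private lemma wt_total (n : ℕ) (q : ℝ) : ∑ S ∈ (EK n).powerset, wt n q S = 1 := by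
  have h := sum_pow_card (EK n) (1 - q) q
  rw [sub_add_cancel, one_pow] at h
  exact h

private lemma lowerD {n : ℕ} (hn : 2 ≤ n) {q : ℝ} (hq0 : 0 ≤ q) (hq8 : q ≤ 1 / 8) :
    ((n : ℝ) - 1) * q ^ (n - 1) ≤ ∑ S ∈ DD n, wt n q S := by
  have hq1 : q ≤ 1 := by linarith
  obtain rfl | hn3 : n = 2 ∨ 3 ≤ n := by omega
  · -- n = 2 : single event suffices
    have hsub : (EK 2).powerset.filter (fun S => Disjoint S (inc (0 : Fin 2))) ⊆ DD 2 := by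
      intro S hS
      rw [Finset.mem_filter] at hS
      rw [DD, Finset.mem_filter]
      exact ⟨hS.1, not_connected_of_isolated (le_refl 2) (Finset.mem_powerset.1 hS.1) hS.2⟩
    have hle := Finset.sum_le_sum_of_subset_of_nonneg hsub
      (fun S _ _ => wt_nonneg hq0 hq1 S)
    rw [mu_avoid' (inc_subset (0 : Fin 2)) q, inc_card] at hle
    norm_num at hle ⊢
    linarith
  · set P := (EK n).powerset with hP
    set I : Finset (Sym2 (Fin n)) → Finset (Fin n) :=
      fun S => Finset.univ.filter (fun v : Fin n => Disjoint S (inc v)) with hI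
    have h1 : ∑ v : Fin n, ∑ S ∈ P.filter (fun S => Disjoint S (inc v)), wt n q S
        = (n : ℝ) * q ^ (n - 1) := by
      rw [Finset.sum_congr rfl (fun v _ => by rw [mu_avoid' (inc_subset v) q, inc_card]),
        Finset.sum_const, Finset.card_univ, Fintype.card_fin, nsmul_eq_mul]
    have h2 : ∑ p ∈ (Finset.univ : Finset (Fin n)).offDiag,
          ∑ S ∈ P.filter (fun S => Disjoint S (inc p.1 ∪ inc p.2)), wt n q S
        = ((n : ℝ) * n - n) * q ^ (2 * n - 3) := by
      have e : ∀ p ∈ (Finset.univ : Finset (Fin n)).offDiag,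
          ∑ S ∈ P.filter (fun S => Disjoint S (inc p.1 ∪ inc p.2)), wt n q S
            = q ^ (2 * n - 3) := by
        intro p hp
        have hne := (Finset.mem_offDiag.1 hp).2.2
        rw [mu_avoid' (Finset.union_subset (inc_subset p.1) (inc_subset p.2)) q,
          inc_union_card hne]
      rw [Finset.sum_congr rfl e, Finset.sum_const, nsmul_eq_mul, Finset.offDiag_card,
        Finset.card_univ, Fintype.card_fin]
      congr 1
      have hnn : n ≤ n * n := Nat.le_mul_of_pos_left n (by omega)
      rw [Nat.cast_sub hnn, Nat.cast_mul]
    have swap1 : ∑ v : Fin n, ∑ S ∈ P.filter (fun S => Disjoint S (inc v)), wt n q S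
        = ∑ S ∈ P, ((I S).card : ℝ) * wt n q S := by
      simp_rw [Finset.sum_filter]
      rw [Finset.sum_comm]
      refine Finset.sum_congr rfl fun S _ => ?_
      rw [← Finset.sum_filter, Finset.sum_const, nsmul_eq_mul]
    have swap2 : ∑ p ∈ (Finset.univ : Finset (Fin n)).offDiag,
          ∑ S ∈ P.filter (fun S => Disjoint S (inc p.1 ∪ inc p.2)), wt n q S
        = ∑ S ∈ P, (((I S).offDiag.card : ℝ)) * wt n q S := by
      simp_rw [Finset.sum_filter]
      rw [Finset.sum_comm]
      refine Finset.sum_congr rfl fun S _ => ?_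
      have hfs : Finset.filter (fun p => Disjoint S (inc p.1 ∪ inc p.2))
          (Finset.univ : Finset (Fin n)).offDiag = (I S).offDiag := by
        ext ⟨v, u⟩
        simp only [Finset.mem_filter, Finset.mem_offDiag, Finset.mem_univ, true_and, hI,
          Finset.disjoint_union_right]
        tauto
      rw [← Finset.sum_filter, hfs, Finset.sum_const, nsmul_eq_mul]
    have hpoint : ∀ S ∈ P, ((I S).card : ℝ) * wt n q S - ((I S).offDiag.card : ℝ) * wt n q S
        ≤ if ¬ ConnP S then wt n q S else 0 := by
      intro S hS
      have hw := wt_nonneg hq0 hq1 S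
      rcases Nat.eq_zero_or_pos (I S).card with hc | hc
      · have hz : ((I S).offDiag.card : ℝ) = 0 := by
          rw [Finset.offDiag_card, hc]; norm_num
        rw [hc, hz]
        norm_num
        split_ifs <;> simp [hw]
      · obtain ⟨v, hv⟩ := Finset.card_pos.1 hc
        rw [hI] at hv
        simp only [Finset.mem_filter, Finset.mem_univ, true_and] at hv
        have hnc : ¬ ConnP S :=
          not_connected_of_isolated hn (Finset.mem_powerset.1 (hP ▸ hS)) hv
        rw [if_pos hnc, Finset.offDiag_card]
        have hle2 : (I S).card ≤ (I S).card * (I S).card :=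
          Nat.le_mul_of_pos_left _ hc
        rw [Nat.cast_sub hle2, Nat.cast_mul]
        have h1c : (1 : ℝ) ≤ ((I S).card : ℝ) := by exact_mod_cast hc
        nlinarith [hw, sq_nonneg (((I S).card : ℝ) - 1)]
    have hDD : ∑ S ∈ DD n, wt n q S = ∑ S ∈ P, if ¬ ConnP S then wt n q S else 0 := by
      rw [show DD n = P.filter (fun S => ¬ ConnP S) from rfl, Finset.sum_filter]
    have hmain : (n : ℝ) * q ^ (n - 1) - ((n : ℝ) * n - n) * q ^ (2 * n - 3)
        ≤ ∑ S ∈ DD n, wt n q S := by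
      rw [← h1, ← h2, swap1, swap2, ← Finset.sum_sub_distrib, hDD]
      exact Finset.sum_le_sum hpoint
    have hq2 : ((n : ℝ) * n - n) * q ^ (2 * n - 3) ≤ q ^ (n - 1) := by
      have e : 2 * n - 3 = (n - 1) + (n - 2) := by omega
      have hnpos : (0 : ℝ) ≤ (n : ℝ) * n - n := by
        have : (1 : ℝ) ≤ (n : ℝ) := by exact_mod_cast (by omega : 1 ≤ n)
        nlinarith
      have b1 : q ^ (n - 2) ≤ (1 / 8 : ℝ) ^ (n - 2) := pow_le_pow_left₀ hq0 hq8 _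
      have h8 : ((n : ℝ) * n - n) ≤ (8 : ℝ) ^ (n - 2) := by
        have hb := nat_mul_bound n hn3
        have hcast : ((n * (n - 1) : ℕ) : ℝ) = (n : ℝ) * n - n := by
          rw [Nat.cast_mul, Nat.cast_sub (show 1 ≤ n by omega)]
          push_cast
          ring
        calc ((n : ℝ) * n - n) = ((n * (n - 1) : ℕ) : ℝ) := hcast.symm
          _ ≤ ((8 ^ (n - 2) : ℕ) : ℝ) := by exact_mod_cast hb
          _ = (8 : ℝ) ^ (n - 2) := by push_cast; rfl
      have b2 : ((n : ℝ) * n - n) * (1 / 8 : ℝ) ^ (n - 2) ≤ 1 := by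
        calc ((n : ℝ) * n - n) * (1 / 8 : ℝ) ^ (n - 2)
            ≤ (8 : ℝ) ^ (n - 2) * (1 / 8 : ℝ) ^ (n - 2) :=
              mul_le_mul_of_nonneg_right h8 (by positivity)
          _ = 1 := by rw [← mul_pow]; norm_num
      calc ((n : ℝ) * n - n) * q ^ (2 * n - 3)
          = q ^ (n - 1) * (((n : ℝ) * n - n) * q ^ (n - 2)) := by rw [e, pow_add]; ring
        _ ≤ q ^ (n - 1) * 1 := by
            apply mul_le_mul_of_nonneg_left _ (pow_nonneg hq0 _)
            calc ((n : ℝ) * n - n) * q ^ (n - 2)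
                ≤ ((n : ℝ) * n - n) * (1 / 8 : ℝ) ^ (n - 2) :=
                  mul_le_mul_of_nonneg_left b1 hnpos
              _ ≤ 1 := b2
        _ = q ^ (n - 1) := mul_one _
    linarith

private lemma count_contain {n : ℕ} (v0 : Fin n) (s : Finset (Finset (Fin n)))
    (k : ℕ) (hs : ∀ A ∈ s, v0 ∈ A ∧ A.card = k) :
    s.card ≤ (n - 1).choose (k - 1) := by
  have hmapsto : ∀ A ∈ s, A.erase v0 ∈ (Finset.univ.erase v0).powersetCard (k - 1) := by
    intro A hA
    rw [Finset.mem_powersetCard]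
    exact ⟨Finset.erase_subset_erase _ (Finset.subset_univ A),
      by rw [Finset.card_erase_of_mem (hs A hA).1, (hs A hA).2]⟩
  have hinj : Set.InjOn (fun A : Finset (Fin n) => A.erase v0) (↑s : Set (Finset (Fin n))) := by
    intro A hA B hB h
    simp only at h
    rw [← Finset.insert_erase (hs A (Finset.mem_coe.1 hA)).1, h,
      Finset.insert_erase (hs B (Finset.mem_coe.1 hB)).1]
  have h := Finset.card_le_card_of_injOn _ hmapsto hinj
  rwa [Finset.card_powersetCard, Finset.card_erase_of_mem (Finset.mem_univ v0),
    Finset.card_univ, Fintype.card_fin] at h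

private lemma count_contain_all {n : ℕ} (v0 : Fin n) (s : Finset (Finset (Fin n)))
    (hs : ∀ A ∈ s, v0 ∈ A) : s.card ≤ 2 ^ (n - 1) := by
  have hmapsto : ∀ A ∈ s, A.erase v0 ∈ (Finset.univ.erase v0).powerset := by
    intro A hA
    rw [Finset.mem_powerset]
    exact Finset.erase_subset_erase _ (Finset.subset_univ A)
  have hinj : Set.InjOn (fun A : Finset (Fin n) => A.erase v0) (↑s : Set (Finset (Fin n))) := by
    intro A hA B hB h
    simp only at h
    rw [← Finset.insert_erase (hs A (Finset.mem_coe.1 hA)), h,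
      Finset.insert_erase (hs B (Finset.mem_coe.1 hB))]
  have h := Finset.card_le_card_of_injOn _ hmapsto hinj
  rwa [Finset.card_powerset, Finset.card_erase_of_mem (Finset.mem_univ v0),
    Finset.card_univ, Fintype.card_fin] at h

private lemma upperD {n : ℕ} (hn : 2 ≤ n) {q : ℝ} (hq0 : 0 ≤ q) (hq8 : q ≤ 1 / 8) :
    ∑ S ∈ DD n, wt n q S ≤ ((n : ℝ) + 1) * q ^ (n - 1) := by
  have hq1 : q ≤ 1 := by linarith
  set v0 : Fin n := ⟨0, by omega⟩ with hv0
  set 𝒜 := (Finset.univ : Finset (Fin n)).powerset.filter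
    (fun A => v0 ∈ A ∧ A ≠ Finset.univ) with hA
  have hmaps : ∀ S ∈ DD n, comp v0 S ∈ 𝒜 := by
    intro S hS
    rw [DD, Finset.mem_filter] at hS
    rw [hA, Finset.mem_filter, Finset.mem_powerset]
    exact ⟨Finset.subset_univ _, comp_mem v0 S, comp_ne_univ hS.2⟩
  have hstep1 : ∑ S ∈ DD n, wt n q S
      = ∑ A ∈ 𝒜, ∑ S ∈ (DD n).filter (fun S => comp v0 S = A), wt n q S :=
    (Finset.sum_fiberwise_of_maps_to hmaps _).symm
  have hstep2 : ∀ A ∈ 𝒜, ∑ S ∈ (DD n).filter (fun S => comp v0 S = A), wt n q S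
      ≤ q ^ (A.card * (n - A.card)) := by
    intro A hAmem
    have hsub : (DD n).filter (fun S => comp v0 S = A)
        ⊆ (EK n).powerset.filter (fun S => Disjoint S (cross A)) := by
      intro S hS
      rw [Finset.mem_filter] at hS
      obtain ⟨hS1, hS2⟩ := hS
      rw [DD, Finset.mem_filter] at hS1
      rw [Finset.mem_filter]
      exact ⟨hS1.1, hS2 ▸ comp_disjoint v0 S⟩
    calc ∑ S ∈ (DD n).filter (fun S => comp v0 S = A), wt n q S
        ≤ ∑ S ∈ (EK n).powerset.filter (fun S => Disjoint S (cross A)), wt n q S :=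
          Finset.sum_le_sum_of_subset_of_nonneg hsub (fun S _ _ => wt_nonneg hq0 hq1 S)
      _ = q ^ (cross A).card := mu_avoid' (cross_subset A) q
      _ = q ^ (A.card * (n - A.card)) := by rw [cross_card]
  have hcard : ∀ A ∈ 𝒜, 1 ≤ A.card ∧ A.card ≤ n - 1 := by
    intro A hAmem
    rw [hA, Finset.mem_filter, Finset.mem_powerset] at hAmem
    constructor
    · exact Finset.card_pos.2 ⟨v0, hAmem.2.1⟩
    · have hlt : A.card < n := by
        have h := Finset.card_lt_card (Finset.ssubset_univ_iff.2 hAmem.2.2)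
        simpa [Finset.card_univ] using h
      omega
  have hstep3 : ∀ A ∈ 𝒜, q ^ (A.card * (n - A.card))
      ≤ q ^ (n - 1) * (1 / 8 : ℝ) ^ ((A.card - 1) * (n - 1 - A.card)) := by
    intro A hAmem
    obtain ⟨h1, h2⟩ := hcard A hAmem
    rw [exp_id h1 (by omega), pow_add]
    exact mul_le_mul_of_nonneg_left (pow_le_pow_left₀ hq0 hq8 _) (pow_nonneg hq0 _)
  have hR : ∑ A ∈ 𝒜, (1 / 8 : ℝ) ^ ((A.card - 1) * (n - 1 - A.card)) ≤ (n : ℝ) + 1 := by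
    set f : Finset (Fin n) → ℝ := fun A => (1 / 8 : ℝ) ^ ((A.card - 1) * (n - 1 - A.card))
      with hf
    rw [← Finset.sum_filter_add_sum_filter_not 𝒜 (fun A => A.card = n - 1) f,
      ← Finset.sum_filter_add_sum_filter_not (𝒜.filter (fun A => ¬ A.card = n - 1))
        (fun A => A.card = 1) f]
    have hS1 : ∑ A ∈ 𝒜.filter (fun A => A.card = n - 1), f A ≤ (n : ℝ) - 1 := by
      have hterm : ∀ A ∈ 𝒜.filter (fun A => A.card = n - 1), f A = 1 := by
        intro A hAm
        rw [Finset.mem_filter] at hAm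
        rw [hf]
        simp only
        rw [hAm.2, show n - 1 - (n - 1) = 0 from by omega, Nat.mul_zero, pow_zero]
      rw [Finset.sum_congr rfl hterm, Finset.sum_const, nsmul_eq_mul, mul_one]
      have hcnt := count_contain v0 (𝒜.filter (fun A => A.card = n - 1)) (n - 1)
        (fun A hAm => by
          rw [Finset.mem_filter] at hAm
          have := hAm.1
          rw [hA, Finset.mem_filter] at this
          exact ⟨this.2.1, hAm.2⟩)
      have hch : (n - 1).choose (n - 1 - 1) = n - 1 := by
        rw [Nat.choose_symm (by omega), Nat.choose_one_right]
      rw [hch] at hcnt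
      calc ((𝒜.filter (fun A => A.card = n - 1)).card : ℝ) ≤ ((n - 1 : ℕ) : ℝ) := by
            exact_mod_cast hcnt
        _ = (n : ℝ) - 1 := by
            rw [Nat.cast_sub (by omega)]; norm_num
    have hS2 : ∑ A ∈ (𝒜.filter (fun A => ¬ A.card = n - 1)).filter (fun A => A.card = 1),
        f A ≤ 1 := by
      have hterm : ∀ A ∈ (𝒜.filter (fun A => ¬ A.card = n - 1)).filter (fun A => A.card = 1),
          f A = 1 := by
        intro A hAm
        rw [Finset.mem_filter] at hAm
        rw [hf]
        simp only
        rw [hAm.2]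
        norm_num
      rw [Finset.sum_congr rfl hterm, Finset.sum_const, nsmul_eq_mul, mul_one]
      have hcnt := count_contain v0
        ((𝒜.filter (fun A => ¬ A.card = n - 1)).filter (fun A => A.card = 1)) 1
        (fun A hAm => by
          rw [Finset.mem_filter] at hAm
          have h1 := hAm.1
          rw [Finset.mem_filter] at h1
          have h2 := h1.1
          rw [hA, Finset.mem_filter] at h2
          exact ⟨h2.2.1, hAm.2⟩)
      rw [Nat.choose_zero_right] at hcnt
      exact_mod_cast hcnt
    have hS3 : ∑ A ∈ (𝒜.filter (fun A => ¬ A.card = n - 1)).filter (fun A => ¬ A.card = 1),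
        f A ≤ 1 := by
      rcases lt_or_ge n 4 with h4 | h4
      · have hempty : (𝒜.filter (fun A => ¬ A.card = n - 1)).filter (fun A => ¬ A.card = 1)
            = ∅ := by
          apply Finset.eq_empty_of_forall_notMem
          intro A hAm
          rw [Finset.mem_filter] at hAm
          have h1 := hAm.1
          rw [Finset.mem_filter] at h1
          obtain ⟨hc1, hc2⟩ := hcard A h1.1
          have := h1.2
          have := hAm.2
          omega
        rw [hempty, Finset.sum_empty]
        norm_num
      · have hterm : ∀ A ∈ (𝒜.filter (fun A => ¬ A.card = n - 1)).filter
            (fun A => ¬ A.card = 1), f A ≤ (1 / 8 : ℝ) ^ (n - 3) := by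
          intro A hAm
          rw [Finset.mem_filter] at hAm
          have h1 := hAm.1
          rw [Finset.mem_filter] at h1
          obtain ⟨hc1, hc2⟩ := hcard A h1.1
          have hk2 : 2 ≤ A.card := by omega
          have hkn2 : A.card ≤ n - 2 := by omega
          rw [hf]
          simp only
          exact pow_le_pow_of_le_one (by norm_num) (by norm_num) (middle_exp hk2 hkn2 h4)
        calc ∑ A ∈ (𝒜.filter (fun A => ¬ A.card = n - 1)).filter (fun A => ¬ A.card = 1), f A
            ≤ ∑ A ∈ (𝒜.filter (fun A => ¬ A.card = n - 1)).filter (fun A => ¬ A.card = 1),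
              (1 / 8 : ℝ) ^ (n - 3) := Finset.sum_le_sum hterm
          _ = (((𝒜.filter (fun A => ¬ A.card = n - 1)).filter
              (fun A => ¬ A.card = 1)).card : ℝ) * (1 / 8 : ℝ) ^ (n - 3) := by
              rw [Finset.sum_const, nsmul_eq_mul]
          _ ≤ (2 : ℝ) ^ (n - 1) * (1 / 8 : ℝ) ^ (n - 3) := by
              apply mul_le_mul_of_nonneg_right _ (by positivity)
              have hcnt := count_contain_all v0
                ((𝒜.filter (fun A => ¬ A.card = n - 1)).filter (fun A => ¬ A.card = 1))
                (fun A hAm => by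
                  rw [Finset.mem_filter] at hAm
                  have h1 := hAm.1
                  rw [Finset.mem_filter] at h1
                  have h2 := h1.1
                  rw [hA, Finset.mem_filter] at h2
                  exact h2.2.1)
              calc (((𝒜.filter (fun A => ¬ A.card = n - 1)).filter
                  (fun A => ¬ A.card = 1)).card : ℝ) ≤ ((2 ^ (n - 1) : ℕ) : ℝ) := by
                    exact_mod_cast hcnt
                _ = (2 : ℝ) ^ (n - 1) := by push_cast; rfl
          _ ≤ 1 := middle_count_bound h4
    linarith
  calc ∑ S ∈ DD n, wt n q S ≤ ∑ A ∈ 𝒜, q ^ (A.card * (n - A.card)) := by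
        rw [hstep1]; exact Finset.sum_le_sum hstep2
    _ ≤ ∑ A ∈ 𝒜, q ^ (n - 1) * (1 / 8 : ℝ) ^ ((A.card - 1) * (n - 1 - A.card)) :=
        Finset.sum_le_sum hstep3
    _ = q ^ (n - 1) * ∑ A ∈ 𝒜, (1 / 8 : ℝ) ^ ((A.card - 1) * (n - 1 - A.card)) := by
        rw [Finset.mul_sum]
    _ ≤ q ^ (n - 1) * ((n : ℝ) + 1) :=
        mul_le_mul_of_nonneg_left hR (pow_nonneg hq0 _)
    _ = ((n : ℝ) + 1) * q ^ (n - 1) := mul_comm _ _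

private lemma rel_top_eq (n : ℕ) (q : ℝ) :
    rel (⊤ : SimpleGraph (Fin n)) q = ∑ S ∈ (EK n).powerset.filter
        (fun (S : Finset (Sym2 (Fin n))) =>
          (SimpleGraph.fromEdgeSet (↑S : Set (Sym2 (Fin n)))).Connected),
      (1 - q) ^ S.card * q ^ ((EK n).card - S.card) := by
  rw [rel_eq_sum]
  congr! <;>
    (ext e; simp only [EK, SimpleGraph.mem_edgeFinset])

private lemma rel_top_split (n : ℕ) (q : ℝ) :
    rel (⊤ : SimpleGraph (Fin n)) q = 1 - ∑ S ∈ DD n, wt n q S := by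
  rw [rel_top_eq]
  have hsum := Finset.sum_filter_add_sum_filter_not ((EK n).powerset)
    (fun (S : Finset (Sym2 (Fin n))) =>
      (SimpleGraph.fromEdgeSet (↑S : Set (Sym2 (Fin n)))).Connected) (wt n q)
  rw [wt_total n q] at hsum
  have hDD : ((EK n).powerset.filter (fun (S : Finset (Sym2 (Fin n))) =>
      ¬ (SimpleGraph.fromEdgeSet (↑S : Set (Sym2 (Fin n)))).Connected)) = DD n := by
    rw [DD]
    ext S
    rw [Finset.mem_filter, Finset.mem_filter]
    exact Iff.rfl
  rw [hDD] at hsum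
  have hwt : ∑ S ∈ (EK n).powerset.filter
      (fun (S : Finset (Sym2 (Fin n))) =>
        (SimpleGraph.fromEdgeSet (↑S : Set (Sym2 (Fin n)))).Connected),
      (1 - q) ^ S.card * q ^ ((EK n).card - S.card)
      = ∑ S ∈ (EK n).powerset.filter
      (fun (S : Finset (Sym2 (Fin n))) =>
        (SimpleGraph.fromEdgeSet (↑S : Set (Sym2 (Fin n)))).Connected), wt n q S := rfl
  rw [hwt]
  linarith

end Graph

/-- The reliability polynomial of the complete graph on `n` vertices. -/
noncomputable def relK (n : ℕ) : ℝ → ℝ := rel (⊤ : SimpleGraph (Fin n))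

/-- For every `n ≥ 2` and every `q ∈ [0, 1/8]`,
`1 - (n+1)q^(n-1) ≤ r_n(q) ≤ 1 - (n-1)q^(n-1)`. -/
theorem relK_bounds (n : ℕ) (hn : 2 ≤ n) :
    ∀ q ∈ Set.Icc (0 : ℝ) (1 / 8),
      1 - ((n : ℝ) + 1) * q ^ (n - 1) ≤ relK n q ∧
      relK n q ≤ 1 - ((n : ℝ) - 1) * q ^ (n - 1) := by
  rintro q ⟨hq0, hq8⟩
  have key : relK n q = 1 - ∑ S ∈ DD n, wt n q S := rel_top_split n q
  have hL := lowerD hn hq0 hq8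
  have hU := upperD hn hq0 hq8
  rw [key]
  constructor <;> linarith
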